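/- Fix a minimum average reward τ ∈ [0,1] and a regularization factor ε > 0. Define the mean U¹(v) = Σ_{i∈S} r_i v_i / D(v), the below-target semi-variance TSV_τ(v) = τ²/D(v) + Σ_{i∈S, r_i ≤ τ} (r_i − τ)² v_i / D(v), and the Sortino ratio So(v) = (U¹(v) − τ)/√(ε + TSV_τ(v)). Then (a) |So(v)| ≤ 1/√ε for every v ∈ [0,1]^S; and (b) for all v ≤ v' in [0,1]^S, |So(v') − So(v)| ≤ ((2ε^{−1/2} + ε^{−3/2})/D(v)) · Σ_{i∈S}(v'_i − v_i). -/

import Mathlib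

/-- `D(v) = 1 + ∑_{i∈S} v i`, the MNL normalization constant. -/
noncomputable def mnlD {ι : Type*} (S : Finset ι) (v : ι → ℝ) : ℝ := 1 + ∑ i ∈ S, v i

/-- The mean of the MNL purchase-profit distribution. -/
noncomputable def mnlMean {ι : Type*} (S : Finset ι) (r : ι → ℝ) (v : ι → ℝ) : ℝ :=
  (∑ i ∈ S, r i * v i) / mnlD S v

/-- The below-target semi-variance with target `τ` of the MNL purchase-profit distribution. -/
noncomputable def mnlTSV {ι : Type*} (S : Finset ι) (r : ι → ℝ) (τ : ℝ) (v : ι → ℝ) : ℝ :=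
  τ ^ 2 / mnlD S v + (∑ i ∈ S.filter (fun i => r i ≤ τ), (r i - τ) ^ 2 * v i) / mnlD S v

/-- The Sortino ratio of the MNL purchase-profit distribution with minimum average reward `τ`
and regularization factor `ε`: `So(v) = (U¹(v) − τ)/√(ε + TSV_τ(v))`. -/
noncomputable def mnlSortino {ι : Type*} (S : Finset ι) (r : ι → ℝ) (τ ε : ℝ)
    (v : ι → ℝ) : ℝ :=
  (mnlMean S r v - τ) / Real.sqrt (ε + mnlTSV S r τ v)


lemma aux_ratio (a a' d Δ : ℝ) (hd : 1 ≤ d) (ha : 0 ≤ a) (had : a ≤ d) (hΔ : 0 ≤ Δ)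
    (h1 : 0 ≤ a' - a) (h2 : a' - a ≤ Δ) : |a' / (d + Δ) - a / d| ≤ 2 * Δ / d := by
  have hd0 : (0:ℝ) < d := by linarith
  have hd' : (0:ℝ) < d + Δ := by linarith
  have key : a' / (d + Δ) - a / d = (a' - a) / (d + Δ) - a * Δ / (d * (d + Δ)) := by
    field_simp; ring
  rw [key]
  have hb1 : |(a' - a) / (d + Δ)| ≤ Δ / (d + Δ) := by
    rw [abs_div, abs_of_pos hd', abs_of_nonneg h1]
    gcongr
  have hb2 : |a * Δ / (d * (d + Δ))| ≤ Δ / (d + Δ) := by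
    rw [abs_div, abs_of_pos (mul_pos hd0 hd'), abs_of_nonneg (mul_nonneg ha hΔ)]
    rw [div_le_div_iff₀ (mul_pos hd0 hd') hd']
    nlinarith [mul_le_mul_of_nonneg_right (mul_le_mul_of_nonneg_right had hΔ) hd'.le]
  calc |(a' - a) / (d + Δ) - a * Δ / (d * (d + Δ))|
      ≤ |(a' - a) / (d + Δ)| + |a * Δ / (d * (d + Δ))| := abs_sub _ _
    _ ≤ Δ / (d + Δ) + Δ / (d + Δ) := by linarith
    _ = 2 * Δ / (d + Δ) := by ring
    _ ≤ 2 * Δ / d := by gcongr; linarith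

lemma aux_sqrt (ε T T' : ℝ) (hε : 0 < ε) (hT : 0 ≤ T) (hT' : 0 ≤ T') :
    |1 / Real.sqrt (ε + T') - 1 / Real.sqrt (ε + T)| ≤ |T' - T| / (2 * ε * Real.sqrt ε) := by
  set s := Real.sqrt (ε + T) with hs_def
  set s' := Real.sqrt (ε + T') with hs'_def
  have hεs : 0 < Real.sqrt ε := Real.sqrt_pos.2 hε
  have hse : Real.sqrt ε ≤ s := Real.sqrt_le_sqrt (by linarith)
  have hse' : Real.sqrt ε ≤ s' := Real.sqrt_le_sqrt (by linarith)
  have hs : 0 < s := lt_of_lt_of_le hεs hse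
  have hs' : 0 < s' := lt_of_lt_of_le hεs hse'
  have hs2 : s ^ 2 = ε + T := Real.sq_sqrt (by linarith)
  have hs'2 : s' ^ 2 = ε + T' := Real.sq_sqrt (by linarith)
  have hεsq : Real.sqrt ε ^ 2 = ε := Real.sq_sqrt hε.le
  have key : 1 / s' - 1 / s = (s - s') / (s * s') := by
    rw [div_sub_div _ _ hs'.ne' hs.ne', one_mul, mul_one, mul_comm s' s]
  rw [key, abs_div, abs_of_pos (mul_pos hs hs')]
  have hnum : |s - s'| * (s + s') = |T - T'| := by
    rw [← abs_of_pos (show (0:ℝ) < s + s' by linarith), ← abs_mul]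
    congr 1
    nlinarith
  have hss' : |s - s'| = |T - T'| / (s + s') := by
    rw [eq_div_iff (by positivity)]; exact hnum
  rw [hss', div_div, abs_sub_comm T T']
  have h2 : ε ≤ s * s' := by nlinarith
  have h3 : 2 * ε * Real.sqrt ε ≤ (s + s') * (s * s') := by
    nlinarith [mul_le_mul_of_nonneg_right (show 2 * Real.sqrt ε ≤ s + s' by linarith)
        (le_of_lt (mul_pos hs hs')),
      mul_le_mul_of_nonneg_left h2 (show (0:ℝ) ≤ 2 * Real.sqrt ε by positivity)]
  exact div_le_div_of_nonneg_left (abs_nonneg _) (by positivity) h3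

section helpers
variable {ι : Type*} (S : Finset ι)

lemma mnlD_ge (v : ι → ℝ) (hv : ∀ i ∈ S, 0 ≤ v i ∧ v i ≤ 1) : 1 ≤ mnlD S v := by
  have : 0 ≤ ∑ i ∈ S, v i := Finset.sum_nonneg fun i hi => (hv i hi).1
  unfold mnlD; linarith

lemma mnlMean_mem (r : ι → ℝ) (hr : ∀ i ∈ S, 0 < r i ∧ r i ≤ 1) (v : ι → ℝ)
    (hv : ∀ i ∈ S, 0 ≤ v i ∧ v i ≤ 1) : 0 ≤ mnlMean S r v ∧ mnlMean S r v ≤ 1 := by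
  have hD := mnlD_ge S v hv
  have hD0 : 0 < mnlD S v := by linarith
  constructor
  · exact div_nonneg (Finset.sum_nonneg fun i hi => mul_nonneg (hr i hi).1.le (hv i hi).1) hD0.le
  · rw [mnlMean, div_le_one hD0]
    have h1 : ∑ i ∈ S, r i * v i ≤ ∑ i ∈ S, v i :=
      Finset.sum_le_sum fun i hi => mul_le_of_le_one_left (hv i hi).1 (hr i hi).2
    unfold mnlD; linarith

lemma mnlTSV_nonneg (r : ι → ℝ) (τ : ℝ) (v : ι → ℝ)
    (hv : ∀ i ∈ S, 0 ≤ v i ∧ v i ≤ 1) : 0 ≤ mnlTSV S r τ v := by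
  have hD := mnlD_ge S v hv
  have hD0 : (0:ℝ) < mnlD S v := by linarith
  unfold mnlTSV
  have h1 : 0 ≤ ∑ i ∈ S.filter (fun i => r i ≤ τ), (r i - τ) ^ 2 * v i :=
    Finset.sum_nonneg fun i hi => mul_nonneg (sq_nonneg _) (hv i (Finset.mem_filter.1 hi).1).1
  positivity

end helpers

/-- **Proposition (Sortino ratio: boundedness and Lipschitz condition).** -/
theorem sortino_bounded_and_lipschitz {ι : Type*} (S : Finset ι) (r : ι → ℝ)
    (hr : ∀ i ∈ S, 0 < r i ∧ r i ≤ 1) (τ ε : ℝ) (hτ0 : 0 ≤ τ) (hτ1 : τ ≤ 1) (hε : 0 < ε) :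
    (∀ v : ι → ℝ, (∀ i ∈ S, 0 ≤ v i ∧ v i ≤ 1) →
      |mnlSortino S r τ ε v| ≤ 1 / Real.sqrt ε) ∧
    (∀ v v' : ι → ℝ, (∀ i ∈ S, 0 ≤ v i ∧ v i ≤ 1) → (∀ i ∈ S, 0 ≤ v' i ∧ v' i ≤ 1) →
      (∀ i ∈ S, v i ≤ v' i) →
      |mnlSortino S r τ ε v' - mnlSortino S r τ ε v| ≤
        ((2 * ε ^ (-(1:ℝ)/2) + ε ^ (-(3:ℝ)/2)) / mnlD S v) * ∑ i ∈ S, (v' i - v i)) := by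
  have hεs : 0 < Real.sqrt ε := Real.sqrt_pos.2 hε
  -- part (a), as a standalone fact
  have partA : ∀ v : ι → ℝ, (∀ i ∈ S, 0 ≤ v i ∧ v i ≤ 1) →
      |mnlSortino S r τ ε v| ≤ 1 / Real.sqrt ε := by
    intro v hv
    obtain ⟨hU0, hU1⟩ := mnlMean_mem S r hr v hv
    have hT0 := mnlTSV_nonneg S r τ v hv
    have habs : |mnlMean S r v - τ| ≤ 1 := abs_le.2 ⟨by linarith, by linarith⟩
    have hsq : Real.sqrt ε ≤ Real.sqrt (ε + mnlTSV S r τ v) :=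
      Real.sqrt_le_sqrt (by linarith)
    rw [mnlSortino, abs_div, abs_of_nonneg (Real.sqrt_nonneg _)]
    exact div_le_div₀ zero_le_one habs hεs hsq
  refine ⟨partA, ?_⟩
  intro v v' hv hv' hle
  set Δ : ℝ := ∑ i ∈ S, (v' i - v i) with hΔdef
  have hΔ0 : 0 ≤ Δ := Finset.sum_nonneg fun i hi => by linarith [hle i hi]
  have hD := mnlD_ge S v hv
  have hD0 : 0 < mnlD S v := by linarith
  have hD' : mnlD S v' = mnlD S v + Δ := by
    simp only [mnlD, hΔdef, Finset.sum_sub_distrib]; ring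
  -- bound on the mean difference
  have hU : |mnlMean S r v' - mnlMean S r v| ≤ 2 * Δ / mnlD S v := by
    have ha : 0 ≤ ∑ i ∈ S, r i * v i :=
      Finset.sum_nonneg fun i hi => mul_nonneg (hr i hi).1.le (hv i hi).1
    have had : (∑ i ∈ S, r i * v i) ≤ mnlD S v := by
      have h1 : ∑ i ∈ S, r i * v i ≤ ∑ i ∈ S, v i :=
        Finset.sum_le_sum fun i hi => mul_le_of_le_one_left (hv i hi).1 (hr i hi).2
      unfold mnlD; linarith
    have hdiff : (∑ i ∈ S, r i * v' i) - (∑ i ∈ S, r i * v i)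
        = ∑ i ∈ S, r i * (v' i - v i) := by
      rw [← Finset.sum_sub_distrib]; exact Finset.sum_congr rfl fun i hi => by ring
    have h1 : 0 ≤ (∑ i ∈ S, r i * v' i) - (∑ i ∈ S, r i * v i) := by
      rw [hdiff]
      exact Finset.sum_nonneg fun i hi =>
        mul_nonneg (hr i hi).1.le (by linarith [hle i hi])
    have h2 : (∑ i ∈ S, r i * v' i) - (∑ i ∈ S, r i * v i) ≤ Δ := by
      rw [hdiff, hΔdef]
      exact Finset.sum_le_sum fun i hi =>
        mul_le_of_le_one_left (by linarith [hle i hi]) (hr i hi).2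
    have := aux_ratio (∑ i ∈ S, r i * v i) (∑ i ∈ S, r i * v' i) (mnlD S v) Δ
      hD ha had hΔ0 h1 h2
    simpa [mnlMean, hD'] using this
  -- bound on the semi-variance difference
  have hT : |mnlTSV S r τ v' - mnlTSV S r τ v| ≤ 2 * Δ / mnlD S v := by
    set W : ℝ := ∑ i ∈ S.filter (fun i => r i ≤ τ), (r i - τ) ^ 2 * v i with hWdef
    set W' : ℝ := ∑ i ∈ S.filter (fun i => r i ≤ τ), (r i - τ) ^ 2 * v' i with hW'def
    have hTrw : mnlTSV S r τ v = (τ ^ 2 + W) / mnlD S v := by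
      rw [mnlTSV, ← add_div]
    have hT'rw : mnlTSV S r τ v' = (τ ^ 2 + W') / mnlD S v' := by
      rw [mnlTSV, ← add_div]
    have hsq1 : ∀ i ∈ S, (r i - τ) ^ 2 ≤ 1 := fun i hi => by
      nlinarith [(hr i hi).1, (hr i hi).2]
    have ha : 0 ≤ τ ^ 2 + W := by
      have : 0 ≤ W := Finset.sum_nonneg fun i hi =>
        mul_nonneg (sq_nonneg _) (hv i (Finset.mem_filter.1 hi).1).1
      positivity
    have had : τ ^ 2 + W ≤ mnlD S v := by
      have hW1 : W ≤ ∑ i ∈ S, v i := by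
        calc W ≤ ∑ i ∈ S.filter (fun i => r i ≤ τ), v i :=
              Finset.sum_le_sum fun i hi =>
                mul_le_of_le_one_left (hv i (Finset.mem_filter.1 hi).1).1
                  (hsq1 i (Finset.mem_filter.1 hi).1)
          _ ≤ ∑ i ∈ S, v i :=
              Finset.sum_le_sum_of_subset_of_nonneg (Finset.filter_subset _ _)
                (fun i hi _ => (hv i hi).1)
      have hτsq : τ ^ 2 ≤ 1 := by nlinarith
      unfold mnlD; linarith
    have hdiff : (τ ^ 2 + W') - (τ ^ 2 + W)
        = ∑ i ∈ S.filter (fun i => r i ≤ τ), (r i - τ) ^ 2 * (v' i - v i) := by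
      have e1 : (τ ^ 2 + W') - (τ ^ 2 + W) = W' - W := by ring
      rw [e1, hWdef, hW'def, ← Finset.sum_sub_distrib]
      exact Finset.sum_congr rfl fun i hi => by ring
    have h1 : 0 ≤ (τ ^ 2 + W') - (τ ^ 2 + W) := by
      rw [hdiff]
      exact Finset.sum_nonneg fun i hi =>
        mul_nonneg (sq_nonneg _) (by linarith [hle i (Finset.mem_filter.1 hi).1])
    have h2 : (τ ^ 2 + W') - (τ ^ 2 + W) ≤ Δ := by
      rw [hdiff, hΔdef]
      calc ∑ i ∈ S.filter (fun i => r i ≤ τ), (r i - τ) ^ 2 * (v' i - v i)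
          ≤ ∑ i ∈ S.filter (fun i => r i ≤ τ), (v' i - v i) :=
            Finset.sum_le_sum fun i hi =>
              mul_le_of_le_one_left (by linarith [hle i (Finset.mem_filter.1 hi).1])
                (hsq1 i (Finset.mem_filter.1 hi).1)
        _ ≤ ∑ i ∈ S, (v' i - v i) :=
            Finset.sum_le_sum_of_subset_of_nonneg (Finset.filter_subset _ _)
              (fun i hi _ => by linarith [hle i hi])
    have := aux_ratio (τ ^ 2 + W) (τ ^ 2 + W') (mnlD S v) Δ hD ha had hΔ0 h1 h2
    rw [hTrw, hT'rw, hD']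
    exact this
  -- assemble
  obtain ⟨hU0, hU1⟩ := mnlMean_mem S r hr v hv
  have hT0 := mnlTSV_nonneg S r τ v hv
  have hT0' := mnlTSV_nonneg S r τ v' hv'
  set A : ℝ := mnlMean S r v
  set A' : ℝ := mnlMean S r v'
  set T : ℝ := mnlTSV S r τ v
  set T' : ℝ := mnlTSV S r τ v'
  set s : ℝ := Real.sqrt (ε + T) with hsdef
  set s' : ℝ := Real.sqrt (ε + T') with hs'def
  have hse : Real.sqrt ε ≤ s := Real.sqrt_le_sqrt (by linarith)
  have hse' : Real.sqrt ε ≤ s' := Real.sqrt_le_sqrt (by linarith)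
  have hs : 0 < s := lt_of_lt_of_le hεs hse
  have hs' : 0 < s' := lt_of_lt_of_le hεs hse'
  have hsplit : mnlSortino S r τ ε v' - mnlSortino S r τ ε v
      = (A' - A) / s' + (A - τ) * (1 / s' - 1 / s) := by
    simp only [mnlSortino]
    show (A' - τ) / s' - (A - τ) / s = _
    field_simp
    ring
  have habs : |A - τ| ≤ 1 := abs_le.2 ⟨by linarith, by linarith⟩
  have hterm1 : |(A' - A) / s'| ≤ (2 * Δ / mnlD S v) / Real.sqrt ε := by
    rw [abs_div, abs_of_pos hs']
    exact div_le_div₀ (by positivity) hU hεs hse'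
  have hterm2 : |(A - τ) * (1 / s' - 1 / s)|
      ≤ (2 * Δ / mnlD S v) / (2 * ε * Real.sqrt ε) := by
    rw [abs_mul]
    calc |A - τ| * |1 / s' - 1 / s| ≤ 1 * (|T' - T| / (2 * ε * Real.sqrt ε)) :=
          mul_le_mul habs (aux_sqrt ε T T' hε hT0 hT0') (abs_nonneg _) zero_le_one
      _ = |T' - T| / (2 * ε * Real.sqrt ε) := one_mul _
      _ ≤ (2 * Δ / mnlD S v) / (2 * ε * Real.sqrt ε) :=
          (div_le_div_iff_of_pos_right (by positivity)).2 hT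
  have hεrw1 : ε ^ (-(1:ℝ)/2) = (Real.sqrt ε)⁻¹ := by
    rw [show (-(1:ℝ)/2) = -(1/2 : ℝ) by ring, Real.rpow_neg hε.le,
      ← Real.sqrt_eq_rpow]
  have hεrw2 : ε ^ (-(3:ℝ)/2) = (ε * Real.sqrt ε)⁻¹ := by
    rw [show (-(3:ℝ)/2) = -(3/2 : ℝ) by ring, Real.rpow_neg hε.le,
      show (3/2 : ℝ) = 1 + 1/2 by ring, Real.rpow_add hε, Real.rpow_one,
      ← Real.sqrt_eq_rpow]
  have hfin : (2 * Δ / mnlD S v) / Real.sqrt ε + (2 * Δ / mnlD S v) / (2 * ε * Real.sqrt ε)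
      = ((2 * ε ^ (-(1:ℝ)/2) + ε ^ (-(3:ℝ)/2)) / mnlD S v) * Δ := by
    rw [hεrw1, hεrw2]
    field_simp
  calc |mnlSortino S r τ ε v' - mnlSortino S r τ ε v|
      = |(A' - A) / s' + (A - τ) * (1 / s' - 1 / s)| := by rw [hsplit]
    _ ≤ |(A' - A) / s'| + |(A - τ) * (1 / s' - 1 / s)| := abs_add_le _ _
    _ ≤ (2 * Δ / mnlD S v) / Real.sqrt ε + (2 * Δ / mnlD S v) / (2 * ε * Real.sqrt ε) := by
        linarith
    _ = ((2 * ε ^ (-(1:ℝ)/2) + ε ^ (-(3:ℝ)/2)) / mnlD S v) * Δ := hfin
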